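/- arXiv:math-ph/0204016 — 4 statements merged into one kernel-verified Lean document; each statement's English description precedes it below -/
import Mathlib

section
/- Let U be a unitary operator on ℓ²(ℤ) whose matrix in the canonical orthonormal basis (φ_k)_{k∈ℤ} is tridiagonal, i.e. ⟨φ_j, U φ_k⟩ = 0 whenever |j−k| > 1. Then at least one of the following holds: (i) for every k ∈ ℤ, U φ_k = c_k φ_{k+1} with |c_k| = 1 (U is a forward shift with unimodular weights); (ii) for every k ∈ ℤ, U φ_k = c_k φ_{k−1} with |c_k| = 1 (U is a backward shift with unimodular weights); (iii) there exists a partition of ℤ into consecutive intervals, each of length 1 or 2, such that for every interval I of the partition the subspace span{φ_m : m ∈ I} is invariant under U (U is an infinite direct sum of 1×1 and 2×2 unitary blocks). -/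
noncomputable section

/-- The Hilbert space `ℓ²(ℤ)`. -/
abbrev H : Type := lp (fun _ : ℤ => ℂ) 2

/-- The canonical orthonormal basis vector `φ_k` of `ℓ²(ℤ)`. -/
def phi (k : ℤ) : H := lp.single 2 k 1

end

open Complex

private lemma inner_phi (j : ℤ) (x : H) : inner (𝕜 := ℂ) (phi j) x = x j := by
  rw [phi, lp.inner_single_left]
  simp [RCLike.inner_apply]

private lemma phi_apply_self (k : ℤ) : (phi k : ∀ _ : ℤ, ℂ) k = 1 :=
  lp.single_apply_self 2 k 1

private lemma phi_apply_ne (k : ℤ) {j : ℤ} (h : j ≠ k) : (phi k : ∀ _ : ℤ, ℂ) j = 0 :=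
  lp.single_apply_ne 2 k 1 h

/-- entry of U -/
private noncomputable def ent (U : H →L[ℂ] H) (j k : ℤ) : ℂ := inner (𝕜 := ℂ) (phi j) (U (phi k))

private lemma expand (U : H →L[ℂ] H)
    (htri : ∀ j k : ℤ, 1 < |j - k| → inner (𝕜 := ℂ) (phi j) (U (phi k)) = 0) (k : ℤ) :
    U (phi k) = ent U (k-1) k • phi (k-1) + ent U k k • phi k + ent U (k+1) k • phi (k+1) := by
  apply lp.ext
  funext j
  have hL : (U (phi k) : ∀ _ : ℤ, ℂ) j = ent U j k := (inner_phi j (U (phi k))).symm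
  rw [lp.coeFn_add, lp.coeFn_add, lp.coeFn_smul, lp.coeFn_smul, lp.coeFn_smul]
  simp only [Pi.add_apply, Pi.smul_apply, smul_eq_mul]
  rcases eq_or_ne j (k-1) with h1 | h1
  · subst h1
    rw [hL, phi_apply_self, phi_apply_ne k (by omega), phi_apply_ne (k+1) (by omega)]
    ring
  rcases eq_or_ne j k with h2 | h2
  · subst h2
    rw [hL, phi_apply_self, phi_apply_ne (j-1) (by omega), phi_apply_ne (j+1) (by omega)]
    ring
  rcases eq_or_ne j (k+1) with h3 | h3
  · subst h3
    rw [hL, phi_apply_self, phi_apply_ne (k-1) (by omega), phi_apply_ne k (by omega)]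
    ring
  · rw [hL, phi_apply_ne (k-1) h1, phi_apply_ne k h2, phi_apply_ne (k+1) h3]
    rw [ent, htri j k (by rw [lt_abs]; omega)]
    ring

private lemma key (U : H →L[ℂ] H) (hunit : U ∈ unitary (H →L[ℂ] H))
    (htri : ∀ j k : ℤ, 1 < |j - k| → inner (𝕜 := ℂ) (phi j) (U (phi k)) = 0) (j k : ℤ) :
    (starRingEnd ℂ) (ent U (j-1) j) * ent U (j-1) k + (starRingEnd ℂ) (ent U j j) * ent U j k
      + (starRingEnd ℂ) (ent U (j+1) j) * ent U (j+1) k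
    = if j = k then 1 else 0 := by
  have h1 : (ContinuousLinearMap.adjoint U) (U (phi k)) = phi k := by
    rw [← ContinuousLinearMap.star_eq_adjoint, ← ContinuousLinearMap.mul_apply, hunit.1,
      ContinuousLinearMap.one_apply]
  have hUU : inner (𝕜 := ℂ) (U (phi j)) (U (phi k)) = inner (𝕜 := ℂ) (phi j) (phi k) := by
    rw [← ContinuousLinearMap.adjoint_inner_right, h1]
  calc (starRingEnd ℂ) (ent U (j-1) j) * ent U (j-1) k + (starRingEnd ℂ) (ent U j j) * ent U j k
      + (starRingEnd ℂ) (ent U (j+1) j) * ent U (j+1) k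
      = inner (𝕜 := ℂ) (U (phi j)) (U (phi k)) := by
        rw [expand U htri j]
        simp [inner_add_left, inner_smul_left, ent]
        ring
    _ = inner (𝕜 := ℂ) (phi j) (phi k) := hUU
    _ = if j = k then 1 else 0 := by
        rw [inner_phi]
        rcases eq_or_ne j k with h | h
        · subst h; rw [phi_apply_self, if_pos rfl]
        · rw [phi_apply_ne k h, if_neg h]

private lemma ent_star (U : H →L[ℂ] H) (j k : ℤ) :
    ent (star U) j k = (starRingEnd ℂ) (ent U k j) := by
  rw [ent, ent, ContinuousLinearMap.star_eq_adjoint, ContinuousLinearMap.adjoint_inner_right,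
    ← inner_conj_symm]
section
variable (U : H →L[ℂ] H)

/-- down entry at cut k -/
private noncomputable def Df (k : ℤ) : ℂ := ent U (k+1) k
/-- up entry at cut k -/
private noncomputable def Pf (k : ℤ) : ℂ := ent U k (k+1)
/-- diagonal entry -/
private noncomputable def Bf (k : ℤ) : ℂ := ent U k k


private lemma expand' (htri : ∀ j k : ℤ, 1 < |j - k| → inner (𝕜 := ℂ) (phi j) (U (phi k)) = 0) (k : ℤ) :
    U (phi k) = Pf U (k-1) • phi (k-1) + Bf U k • phi k + Df U k • phi (k+1) := by
  rw [expand U htri k]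
  simp only [Pf, Bf, Df, sub_add_cancel]

private lemma hVtri (htri : ∀ j k : ℤ, 1 < |j - k| → inner (𝕜 := ℂ) (phi j) (U (phi k)) = 0) : ∀ j k : ℤ, 1 < |j - k| →
    inner (𝕜 := ℂ) (phi j) ((star U) (phi k)) = 0 := by
  intro j k h
  have h3 : ent U k j = 0 := htri k j (by rwa [abs_sub_comm] at h)
  have h2 : ent (star U) j k = 0 := by rw [ent_star, h3, map_zero]
  exact h2

private lemma colnorm (hunit : U ∈ unitary (H →L[ℂ] H))
    (htri : ∀ j k : ℤ, 1 < |j - k| → inner (𝕜 := ℂ) (phi j) (U (phi k)) = 0) (k : ℤ) :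
    normSq (Pf U (k-1)) + normSq (Bf U k) + normSq (Df U k) = 1 := by
  have h := key U hunit htri k k
  rw [if_pos rfl] at h
  have h2 : ((normSq (Pf U (k-1)) : ℂ) + normSq (Bf U k) + normSq (Df U k)) = 1 := by
    rw [normSq_eq_conj_mul_self, normSq_eq_conj_mul_self, normSq_eq_conj_mul_self]
    rw [← h]
    simp only [Pf, Bf, Df, sub_add_cancel]
  exact_mod_cast h2

private lemma rownorm (hunit : U ∈ unitary (H →L[ℂ] H))
    (htri : ∀ j k : ℤ, 1 < |j - k| → inner (𝕜 := ℂ) (phi j) (U (phi k)) = 0) (k : ℤ) :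
    normSq (Df U (k-1)) + normSq (Bf U k) + normSq (Pf U k) = 1 := by
  have h := key (star U) (Unitary.star_mem hunit) (hVtri U htri) k k
  rw [if_pos rfl] at h
  rw [ent_star, ent_star, ent_star] at h
  have h2 : ((normSq (Df U (k-1)) : ℂ) + normSq (Bf U k) + normSq (Pf U k)) = 1 := by
    rw [← normSq_conj (Df U (k-1)), ← normSq_conj (Bf U k), ← normSq_conj (Pf U k)]
    rw [normSq_eq_conj_mul_self, normSq_eq_conj_mul_self, normSq_eq_conj_mul_self]
    rw [← h]
    simp only [Pf, Bf, Df]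
    rw [show (k:ℤ)-1+1 = k from by ring]
  exact_mod_cast h2

private lemma R3 (hunit : U ∈ unitary (H →L[ℂ] H))
    (htri : ∀ j k : ℤ, 1 < |j - k| → inner (𝕜 := ℂ) (phi j) (U (phi k)) = 0) (k : ℤ) :
    (starRingEnd ℂ) (Bf U k) * Pf U k + (starRingEnd ℂ) (Df U k) * Bf U (k+1) = 0 := by
  have h := key U hunit htri k (k+1)
  rw [if_neg (by omega)] at h
  have hz : ent U (k-1) (k+1) = 0 := htri (k-1) (k+1) (by rw [lt_abs]; omega)
  rw [hz] at h
  simp only [mul_zero, zero_add] at h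
  simpa only [Pf, Bf, Df] using h

private lemma RAC (hunit : U ∈ unitary (H →L[ℂ] H))
    (htri : ∀ j k : ℤ, 1 < |j - k| → inner (𝕜 := ℂ) (phi j) (U (phi k)) = 0) (k : ℤ) : Pf U k = 0 ∨ Df U (k+1) = 0 := by
  have h := key (star U) (Unitary.star_mem hunit) (hVtri U htri) k (k+2)
  rw [if_neg (by omega)] at h
  have hz1 : ent (star U) (k-1) (k+2) = 0 := hVtri U htri (k-1) (k+2) (by rw [lt_abs]; omega)
  have hz2 : ent (star U) k (k+2) = 0 := hVtri U htri k (k+2) (by rw [lt_abs]; omega)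
  rw [hz1, hz2] at h
  simp only [mul_zero, zero_add, add_zero] at h
  rw [ent_star, ent_star] at h
  rcases mul_eq_zero.mp h with h' | h'
  · left
    have : ent U k (k+1) = 0 := by
      have := congrArg (starRingEnd ℂ) h'
      simpa using this
    simpa [Pf] using this
  · right
    have : ent U (k+2) (k+1) = 0 := by
      rwa [map_eq_zero] at h'
    simp only [Df]
    rw [show (k:ℤ)+1+1 = k+2 from by ring]
    exact this
end
private lemma abs_eq_one_of_normSq {z : ℂ} (h : normSq z = 1) : ‖z‖ = 1 := by
  have h1 : ‖z‖ ^ 2 = 1 := by rw [Complex.sq_norm, h]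
  have h2 : (0:ℝ) ≤ ‖z‖ := norm_nonneg z
  have h3 : (‖z‖ - 1) * (‖z‖ + 1) = 0 := by
    have : (‖z‖ - 1) * (‖z‖ + 1) = ‖z‖ ^ 2 - 1 := by ring
    rw [this, h1]; ring
  rcases mul_eq_zero.mp h3 with h4 | h4
  · linarith
  · linarith


/-- A unitary tridiagonal operator on `ℓ²(ℤ)` is either a forward shift with unimodular
weights, or a backward shift with unimodular weights, or an infinite direct sum of `1×1`
and `2×2` unitary blocks: there is a partition of `ℤ` into consecutive intervals of
length `1` or `2` whose associated coordinate subspaces are invariant under `U`. -/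
theorem tridiagonal_unitary_classification (U : H →L[ℂ] H)
    (hunit : U ∈ unitary (H →L[ℂ] H))
    (htri : ∀ j k : ℤ, 1 < |j - k| → inner (𝕜 := ℂ) (phi j) (U (phi k)) = 0) :
    -- (i) forward shift with unimodular weights
    (∃ c : ℤ → ℂ, ∀ k : ℤ, ‖c k‖ = 1 ∧ U (phi k) = c k • phi (k + 1)) ∨
    -- (ii) backward shift with unimodular weights
    (∃ c : ℤ → ℂ, ∀ k : ℤ, ‖c k‖ = 1 ∧ U (phi k) = c k • phi (k - 1)) ∨
    -- (iii) direct sum of 1×1 and 2×2 blocks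
    (∃ blocks : Set (Set ℤ),
      (∀ I ∈ blocks, (∃ m : ℤ, I = {m}) ∨ (∃ m : ℤ, I = {m, m + 1})) ∧
      (∀ I ∈ blocks, ∀ J ∈ blocks, I ≠ J → Disjoint I J) ∧
      (⋃ I ∈ blocks, I) = Set.univ ∧
      (∀ I ∈ blocks, ∀ x ∈ Submodule.span ℂ (phi '' I),
        U x ∈ Submodule.span ℂ (phi '' I))) := by
  classical
  have hcol := colnorm U hunit htri
  have hrow := rownorm U hunit htri
  have hR3 := R3 U hunit htri
  have hRAC := RAC U hunit htri
  have hexp := expand' U htri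
  set N : ℤ → ℝ := fun k => normSq (Df U k) - normSq (Pf U k) with hNdef
  have hstep : ∀ k : ℤ, N (k+1) = N k := by
    intro k
    have h1 := hcol (k+1)
    have h2 := hrow (k+1)
    rw [show (k:ℤ)+1-1 = k from by ring] at h1 h2
    simp only [hNdef]
    linarith
  have hconst : ∀ k : ℤ, N k = N 0 := by
    intro k
    induction k using Int.induction_on with
    | zero => rfl
    | succ i ih => rw [hstep i, ih]
    | pred i ih =>
        have h := hstep (-(i:ℤ)-1)
        rw [show (-(i:ℤ)-1+1) = -(i:ℤ) from by ring] at h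
        rw [← h]; exact ih
  have hNval : ∀ k : ℤ, normSq (Df U k) - normSq (Pf U k) = N 0 := fun k => hconst k
  rcases lt_trichotomy (N 0) 0 with hlt | heq | hgt
  · -- backward shift
    have hP : ∀ k : ℤ, Pf U k ≠ 0 := by
      intro k
      have h := hNval k
      have h2 : 0 < normSq (Pf U k) := by nlinarith [normSq_nonneg (Df U k)]
      exact Complex.normSq_pos.mp h2
    have hD : ∀ k : ℤ, Df U k = 0 := by
      intro k
      have h := (hRAC (k-1)).resolve_left (hP (k-1))
      rwa [show (k:ℤ)-1+1 = k from by ring] at h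
    have hB : ∀ k : ℤ, Bf U k = 0 := by
      intro k
      have h := hR3 k
      rw [hD k, map_zero, zero_mul, add_zero] at h
      rcases mul_eq_zero.mp h with h' | h'
      · rwa [map_eq_zero] at h'
      · exact absurd h' (hP k)
    refine Or.inr (Or.inl ⟨fun k => Pf U (k-1), fun k => ⟨?_, ?_⟩⟩)
    · apply abs_eq_one_of_normSq
      have h := hcol k
      rw [hB k, hD k] at h
      simp only [map_zero] at h
      linarith
    · rw [hexp k, hB k, hD k, zero_smul, zero_smul, add_zero, add_zero]
  · -- block case
    have hEq : ∀ k : ℤ, normSq (Df U k) = normSq (Pf U k) := by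
      intro k; have := hNval k; rw [heq] at this; linarith
    have hDP : ∀ k : ℤ, Df U k = 0 ↔ Pf U k = 0 := by
      intro k
      rw [← Complex.normSq_eq_zero, ← Complex.normSq_eq_zero, hEq k]
    have hnadj : ∀ k : ℤ, Df U k ≠ 0 → Df U (k+1) = 0 := by
      intro k hk
      rcases hRAC k with h | h
      · exact absurd ((hDP k).mpr h) hk
      · exact h
    refine Or.inr (Or.inr ⟨{I | ∃ m : ℤ, (I = {m} ∧ Df U (m-1) = 0 ∧ Df U m = 0) ∨
        (I = {m, m+1} ∧ Df U m ≠ 0)}, ?_, ?_, ?_, ?_⟩)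
    · rintro I ⟨m, ⟨rfl, -, -⟩ | ⟨rfl, -⟩⟩
      · exact Or.inl ⟨m, rfl⟩
      · exact Or.inr ⟨m, rfl⟩
    · rintro I ⟨m, hm⟩ J ⟨m', hm'⟩ hne
      rw [Set.disjoint_left]
      intro x hxI hxJ
      rcases hm with ⟨rfl, hm1, hm2⟩ | ⟨rfl, hm1⟩ <;>
        rcases hm' with ⟨rfl, hn1, hn2⟩ | ⟨rfl, hn1⟩ <;>
          simp only [Set.mem_singleton_iff, Set.mem_insert_iff] at hxI hxJ
      · apply hne; subst hxI; subst hxJ; rfl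
      · rcases hxJ with h | h
        · subst hxI; subst h; exact hn1 hm2
        · subst hxI; subst h
          rw [show (m':ℤ)+1-1 = m' from by ring] at hm1
          exact hn1 hm1
      · rcases hxI with h | h
        · subst hxJ; subst h; exact hm1 hn2
        · subst hxJ; subst h
          rw [show (m:ℤ)+1-1 = m from by ring] at hn1
          exact hm1 hn1
      · have hmm : m ≠ m' := fun h => hne (by rw [h])
        rcases hxI with h | h <;> rcases hxJ with h' | h'
        · exact hmm (h ▸ h')
        · -- x = m, x = m'+1 : m = m'+1
          have : m = m'+1 := by omega
          subst this
          exact hm1 (hnadj m' hn1)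
        · have : m' = m+1 := by omega
          subst this
          exact hn1 (hnadj m hm1)
        · exact hmm (by omega)
    · rw [Set.eq_univ_iff_forall]
      intro x
      simp only [Set.mem_iUnion, exists_prop, Set.mem_setOf_eq]
      by_cases h1 : Df U x = 0
      · by_cases h2 : Df U (x-1) = 0
        · exact ⟨{x}, ⟨x, Or.inl ⟨rfl, h2, h1⟩⟩, rfl⟩
        · refine ⟨{x-1, x-1+1}, ⟨x-1, Or.inr ⟨rfl, h2⟩⟩, ?_⟩
          right; simp only [Set.mem_singleton_iff]; ring
      · exact ⟨{x, x+1}, ⟨x, Or.inr ⟨rfl, h1⟩⟩, Or.inl rfl⟩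
    · rintro I hI x hx
      suffices hle : Submodule.span ℂ (phi '' I) ≤
          Submodule.comap (U : H →ₗ[ℂ] H) (Submodule.span ℂ (phi '' I)) by
        have := hle hx
        simpa only [Submodule.mem_comap, ContinuousLinearMap.coe_coe] using this
      rw [Submodule.span_le]
      rintro y ⟨n, hn, rfl⟩
      simp only [SetLike.mem_coe, Submodule.mem_comap, ContinuousLinearMap.coe_coe]
      obtain ⟨m, hm⟩ := hI
      rcases hm with ⟨rfl, hz1, hz2⟩ | ⟨rfl, hDm⟩
      · have hn' : n = m := hn
        subst hn'
        have hPz : Pf U (n-1) = 0 := (hDP (n-1)).mp hz1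
        rw [hexp n, hPz, hz2, zero_smul, zero_smul, zero_add, add_zero]
        exact Submodule.smul_mem _ _ (Submodule.subset_span ⟨n, rfl, rfl⟩)
      · rcases hn with rfl | hn
        · -- n = m (here n is the first element)
          have hD1 : Df U (n-1) = 0 := by
            by_contra hc
            have := hnadj (n-1) hc
            rw [show (n:ℤ)-1+1 = n from by ring] at this
            exact hDm this
          have hPz : Pf U (n-1) = 0 := (hDP (n-1)).mp hD1
          rw [hexp n, hPz, zero_smul, zero_add]
          refine add_mem (Submodule.smul_mem _ _ (Submodule.subset_span ⟨n, Or.inl rfl, rfl⟩))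
            (Submodule.smul_mem _ _ (Submodule.subset_span ⟨n+1, Or.inr rfl, rfl⟩))
        · have hn' : n = m+1 := hn
          subst hn'
          have hDz : Df U (m+1) = 0 := hnadj m hDm
          rw [hexp (m+1), hDz, zero_smul, add_zero, show (m:ℤ)+1-1 = m from by ring]
          refine add_mem (Submodule.smul_mem _ _ (Submodule.subset_span ⟨m, Or.inl rfl, rfl⟩))
            (Submodule.smul_mem _ _ (Submodule.subset_span ⟨m+1, Or.inr rfl, rfl⟩))
  · -- forward shift
    have hD : ∀ k : ℤ, Df U k ≠ 0 := by
      intro k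
      have h := hNval k
      have h2 : 0 < normSq (Df U k) := by nlinarith [normSq_nonneg (Pf U k)]
      exact Complex.normSq_pos.mp h2
    have hP : ∀ k : ℤ, Pf U k = 0 := fun k => (hRAC k).resolve_right (hD (k+1))
    have hB : ∀ k : ℤ, Bf U k = 0 := by
      intro k
      have h := hR3 (k-1)
      rw [hP (k-1), mul_zero, zero_add, show (k:ℤ)-1+1 = k from by ring] at h
      rcases mul_eq_zero.mp h with h' | h'
      · rw [map_eq_zero] at h'
        exact absurd h' (hD (k-1))
      · exact h'
    refine Or.inl ⟨fun k => Df U k, fun k => ⟨?_, ?_⟩⟩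
    · apply abs_eq_one_of_normSq
      have h := hcol k
      rw [hB k, hP (k-1)] at h
      simp only [map_zero] at h
      linarith
    · rw [hexp k, hB k, hP (k-1), zero_smul, zero_smul, zero_add, zero_add]
end

section
/- Let (θ_k)_{k∈ℤ} and (α_k)_{k∈ℤ} be mutually independent random variables, each uniformly distributed on the torus 𝕋 = ℝ/2πℤ. Fix λ ∈ ℝ and for k ∈ ℤ set η_k = θ_k + θ_{k−1} + α_k − α_{k−1} + λ (computed in 𝕋) and δ_k = (η_{2k}, η_{2k−1}) ∈ 𝕋². Then the random vectors (δ_k)_{k∈ℤ} are independent and identically distributed, each uniformly distributed on 𝕋². -/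
open MeasureTheory ProbabilityTheory AddCircle

instance : Fact (0 < 2 * Real.pi) := ⟨by positivity⟩

namespace DeltaIIDAux

noncomputable section

local notation "𝕋" => AddCircle (2 * Real.pi)

variable {Ω : Type*} [MeasurableSpace Ω] {μ : Measure Ω} [IsProbabilityMeasure μ]

/-- Adding an independent uniform variable gives a product law. -/
lemma key_prod {E : Type*} [MeasurableSpace E] {X : Ω → 𝕋} {Z : Ω → E}
    (hX : Measurable X) (hZ : Measurable Z)
    (hunif : μ.map X = haarAddCircle) (hind : IndepFun X Z μ)
    {f : E → 𝕋} (hf : Measurable f) :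
    μ.map (fun ω => (X ω + f (Z ω), Z ω)) =
      (haarAddCircle : Measure 𝕋).prod (μ.map Z) := by
  haveI : IsProbabilityMeasure (μ.map Z) := Measure.isProbabilityMeasure_map hZ.aemeasurable
  have h1 : μ.map (fun ω => (Z ω, X ω)) = (μ.map Z).prod (μ.map X) :=
    (indepFun_iff_map_prod_eq_prod_map_map hZ.aemeasurable hX.aemeasurable).mp hind.symm
  have hφm : Measurable (fun p : E × 𝕋 => (p.1, p.2 + f p.1)) :=
    measurable_fst.prodMk (measurable_snd.add (hf.comp measurable_fst))
  have hφ : MeasurePreserving (fun p : E × 𝕋 => (p.1, p.2 + f p.1))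
      ((μ.map Z).prod haarAddCircle) ((μ.map Z).prod haarAddCircle) := by
    refine MeasurePreserving.skew_product (g := fun e x => x + f e)
      (MeasurePreserving.id _) ?_ (Filter.Eventually.of_forall fun z => ?_)
    · exact measurable_snd.add (hf.comp measurable_fst)
    · exact map_add_right_eq_self haarAddCircle (f z)
  have h2 : μ.map (fun ω => (Z ω, X ω + f (Z ω))) = (μ.map Z).prod haarAddCircle := by
    have hc : (fun ω => (Z ω, X ω + f (Z ω)))
        = (fun p : E × 𝕋 => (p.1, p.2 + f p.1)) ∘ (fun ω => (Z ω, X ω)) := rfl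
    rw [hc, ← Measure.map_map hφm (hZ.prodMk hX), h1, hunif, hφ.map_eq]
  have hF : Measurable (fun ω => (Z ω, X ω + f (Z ω))) := by fun_prop
  have hc : (fun ω => (X ω + f (Z ω), Z ω))
      = Prod.swap ∘ (fun ω => (Z ω, X ω + f (Z ω))) := rfl
  rw [hc, ← Measure.map_map measurable_swap hF, h2, Measure.prod_swap]

variable (θ α : ℤ → Ω → 𝕋)

/-- Restriction of a function to a finite set of coordinates, as masking. -/
def mask (S : Finset (ℤ ⊕ ℤ)) (y : ℤ ⊕ ℤ → 𝕋) : ℤ ⊕ ℤ → 𝕋 :=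
  fun i => if i ∈ S then y i else 0

/-- The family of phases masked outside the finite set `S`. -/
def fam (S : Finset (ℤ ⊕ ℤ)) (ω : Ω) : ℤ ⊕ ℤ → 𝕋 :=
  fun i => if i ∈ S then Sum.elim θ α i ω else 0

lemma measurable_mask (S : Finset (ℤ ⊕ ℤ)) : Measurable (mask S) := by
  refine measurable_pi_lambda _ fun i => ?_
  by_cases h : i ∈ S
  · simpa [mask, h] using measurable_pi_apply i
  · simpa [mask, h] using measurable_const

lemma measurable_fam (hθ : ∀ k, Measurable (θ k)) (hα : ∀ k, Measurable (α k))
    (S : Finset (ℤ ⊕ ℤ)) : Measurable (fam θ α S) := by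
  refine measurable_pi_lambda _ fun i => ?_
  by_cases h : i ∈ S
  · simp only [fam, if_pos h]
    rcases i with i | i
    · exact hθ i
    · exact hα i
  · simpa [fam, h] using measurable_const

lemma mask_fam {S S' : Finset (ℤ ⊕ ℤ)} (h : S ⊆ S') (ω : Ω) :
    mask S (fam θ α S' ω) = fam θ α S ω := by
  funext i
  by_cases hi : i ∈ S
  · simp [mask, fam, hi, h hi]
  · simp [mask, fam, hi]

lemma fam_apply_mem {S : Finset (ℤ ⊕ ℤ)} {i : ℤ ⊕ ℤ} (h : i ∈ S) (ω : Ω) :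
    fam θ α S ω i = Sum.elim θ α i ω := if_pos h

lemma indep_fam (hθ : ∀ k, Measurable (θ k)) (hα : ∀ k, Measurable (α k))
    (hindep : iIndepFun (Sum.elim θ α) μ)
    {n : ℤ} {S : Finset (ℤ ⊕ ℤ)} (hn : Sum.inl n ∉ S) :
    IndepFun (θ n) (fam θ α S) μ := by
  have hm : ∀ i, Measurable (Sum.elim θ α i) := by
    rintro (i | i)
    · exact hθ i
    · exact hα i
  have h := hindep.indepFun_finset {Sum.inl n} S (by simpa using hn) hm
  have h2 := h.comp
    (φ := fun y : ({Sum.inl n} : Finset (ℤ ⊕ ℤ)) → 𝕋 => y ⟨Sum.inl n, Finset.mem_singleton_self _⟩)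
    (ψ := fun y : {x // x ∈ S} → 𝕋 => fun i => if h : i ∈ S then y ⟨i, h⟩ else 0)
    (measurable_pi_apply _ : Measurable fun y : ({Sum.inl n} : Finset (ℤ ⊕ ℤ)) → 𝕋 =>
      y ⟨Sum.inl n, Finset.mem_singleton_self _⟩)
    (by
      refine measurable_pi_lambda _ fun i => ?_
      by_cases h : i ∈ S
      · simp only [dif_pos h]
        exact measurable_pi_apply _
      · simpa [h] using measurable_const)
  have e1 : (fun y : ({Sum.inl n} : Finset (ℤ ⊕ ℤ)) → 𝕋 =>
      y ⟨Sum.inl n, Finset.mem_singleton_self _⟩) ∘ (fun a (i : ({Sum.inl n} : Finset (ℤ ⊕ ℤ))) =>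
        Sum.elim θ α i a) = θ n := rfl
  have e2 : (fun y : {x // x ∈ S} → 𝕋 => fun i => if h : i ∈ S then y ⟨i, h⟩ else 0) ∘
      (fun a (i : {x // x ∈ S}) => Sum.elim θ α i a) = fam θ α S := by
    funext a
    funext i
    by_cases h : i ∈ S <;> simp [fam, h]
  rwa [e1, e2] at h2


/-- Master lemma: the joint law of `δ m` and the masked phase data with indices `< 2m-1`
is the product of `haar × haar` with the law of the data. -/
lemma master
    (hθ : ∀ k, Measurable (θ k)) (hα : ∀ k, Measurable (α k))
    (hindep : iIndepFun (Sum.elim θ α) μ)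
    (hunif_θ : ∀ k, μ.map (θ k) = haarAddCircle)
    (lam : ℝ) (η : ℤ → Ω → 𝕋)
    (hη : ∀ k ω, η k ω = θ k ω + θ (k - 1) ω + α k ω - α (k - 1) ω + (lam : 𝕋))
    (δ : ℤ → Ω → 𝕋 × 𝕋)
    (hδ : ∀ k ω, δ k ω = (η (2 * k) ω, η (2 * k - 1) ω))
    (m : ℤ) (T : Finset (ℤ ⊕ ℤ))
    (hT1 : Sum.inl (2 * m) ∉ T) (hT2 : Sum.inl (2 * m - 1) ∉ T) :
    μ.map (fun ω => (δ m ω, fam θ α T ω)) =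
      ((haarAddCircle : Measure 𝕋).prod haarAddCircle).prod (μ.map (fam θ α T)) := by
  classical
  have hηm : ∀ j, Measurable (η j) := fun j => by
    have hj : η j = fun ω => θ j ω + θ (j - 1) ω + α j ω - α (j - 1) ω + (lam : 𝕋) :=
      funext (hη j)
    rw [hj]; fun_prop (disch := first | exact hθ _ | exact hα _)
  -- index sets
  set T1 : Finset (ℤ ⊕ ℤ) := insert (Sum.inl (2 * m - 1 - 1))
      (insert (Sum.inr (2 * m - 1)) (insert (Sum.inr (2 * m - 1 - 1)) T)) with hT1def
  set T' : Finset (ℤ ⊕ ℤ) := insert (Sum.inl (2 * m - 1)) (insert (Sum.inr (2 * m)) T1)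
    with hT'def
  have hTT1 : T ⊆ T1 := by intro i hi; simp [hT1def, hi]
  have hTT' : T ⊆ T' := by intro i hi; simp [hT'def, hT1def, hi]
  have hmem1 : Sum.inl (2 * m - 1) ∈ T' := by simp [hT'def]
  have hmem2 : Sum.inr (2 * m) ∈ T' := by simp [hT'def]
  have hmem3 : Sum.inl (2 * m - 1 - 1) ∈ T' := by simp [hT'def, hT1def]
  have hmem4 : Sum.inr (2 * m - 1) ∈ T' := by simp [hT'def, hT1def]
  have hmem5 : Sum.inr (2 * m - 1 - 1) ∈ T' := by simp [hT'def, hT1def]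
  have hmem1' : Sum.inl (2 * m - 1 - 1) ∈ T1 := by simp [hT1def]
  have hmem2' : Sum.inr (2 * m - 1) ∈ T1 := by simp [hT1def]
  have hmem3' : Sum.inr (2 * m - 1 - 1) ∈ T1 := by simp [hT1def]
  have hnotin' : Sum.inl (2 * m) ∉ T' := by
    simp only [hT'def, hT1def, Finset.mem_insert]
    push_neg
    refine ⟨by simp; omega, by simp, by simp; omega, by simp, by simp, hT1⟩
  have hnotin1 : Sum.inl (2 * m - 1) ∉ T1 := by
    simp only [hT1def, Finset.mem_insert]
    push_neg
    refine ⟨by simp; omega, by simp, by simp, hT2⟩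
  -- the measurable "remainder" functions
  set f' : (ℤ ⊕ ℤ → 𝕋) → 𝕋 := fun y =>
    y (Sum.inl (2 * m - 1)) + y (Sum.inr (2 * m)) - y (Sum.inr (2 * m - 1)) + (lam : 𝕋)
    with hf'def
  set f1 : (ℤ ⊕ ℤ → 𝕋) → 𝕋 := fun y =>
    y (Sum.inl (2 * m - 1 - 1)) + y (Sum.inr (2 * m - 1)) - y (Sum.inr (2 * m - 1 - 1)) + (lam : 𝕋)
    with hf1def
  set g' : (ℤ ⊕ ℤ → 𝕋) → 𝕋 := fun y =>
    y (Sum.inl (2 * m - 1)) + y (Sum.inl (2 * m - 1 - 1)) + y (Sum.inr (2 * m - 1))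
      - y (Sum.inr (2 * m - 1 - 1)) + (lam : 𝕋) with hg'def
  have hf'm : Measurable f' := by fun_prop (disch := exact measurable_pi_apply _)
  have hf1m : Measurable f1 := by fun_prop (disch := exact measurable_pi_apply _)
  have hg'm : Measurable g' := by fun_prop (disch := exact measurable_pi_apply _)
  have hfamT' := measurable_fam θ α hθ hα T'
  have hfamT1 := measurable_fam θ α hθ hα T1
  have hfamT := measurable_fam θ α hθ hα T
  haveI : IsProbabilityMeasure (μ.map (fam θ α T)) :=
    Measure.isProbabilityMeasure_map hfamT.aemeasurable
  haveI : IsProbabilityMeasure (μ.map (fam θ α T')) :=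
    Measure.isProbabilityMeasure_map hfamT'.aemeasurable
  haveI : IsProbabilityMeasure (μ.map (fam θ α T1)) :=
    Measure.isProbabilityMeasure_map hfamT1.aemeasurable
  -- Step B : law of (η (2m), fam T')
  have hstepB : μ.map (fun ω => (η (2 * m) ω, fam θ α T' ω)) =
      (haarAddCircle : Measure 𝕋).prod (μ.map (fam θ α T')) := by
    have heq : (fun ω => (η (2 * m) ω, fam θ α T' ω)) =
        (fun ω => (θ (2 * m) ω + f' (fam θ α T' ω), fam θ α T' ω)) := by
      funext ω
      simp only [hη, hf'def, fam_apply_mem θ α hmem1, fam_apply_mem θ α hmem2,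
        fam_apply_mem θ α hmem4, Sum.elim_inl, Sum.elim_inr]
      congr 1
      abel
    rw [heq]
    exact key_prod (hθ _) hfamT' (hunif_θ _) (indep_fam θ α hθ hα hindep hnotin') hf'm
  -- Step D : law of (η (2m-1), fam T)
  have hstepD : μ.map (fun ω => (η (2 * m - 1) ω, fam θ α T ω)) =
      (haarAddCircle : Measure 𝕋).prod (μ.map (fam θ α T)) := by
    have hkey : μ.map (fun ω => (θ (2 * m - 1) ω + f1 (fam θ α T1 ω), fam θ α T1 ω)) =
        (haarAddCircle : Measure 𝕋).prod (μ.map (fam θ α T1)) :=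
      key_prod (hθ _) hfamT1 (hunif_θ _) (indep_fam θ α hθ hα hindep hnotin1) hf1m
    have heq : (fun ω => (η (2 * m - 1) ω, fam θ α T ω)) =
        (Prod.map id (mask T)) ∘
          (fun ω => (θ (2 * m - 1) ω + f1 (fam θ α T1 ω), fam θ α T1 ω)) := by
      funext ω
      simp only [Function.comp_apply, Prod.map_apply, id_eq, mask_fam θ α hTT1]
      congr 1
      simp only [hη, hf1def, fam_apply_mem θ α hmem1', fam_apply_mem θ α hmem2',
        fam_apply_mem θ α hmem3', Sum.elim_inl, Sum.elim_inr]
      abel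
    have hm1 : Measurable (fun ω => (θ (2 * m - 1) ω + f1 (fam θ α T1 ω), fam θ α T1 ω)) := by
      exact ((hθ _).add (hf1m.comp hfamT1)).prodMk hfamT1
    rw [heq, ← Measure.map_map (measurable_id.prodMap (measurable_mask T)) hm1, hkey,
      ← Measure.map_prod_map _ _ measurable_id (measurable_mask T), Measure.map_id,
      Measure.map_map (measurable_mask T) hfamT1]
    congr 1
    exact congrArg (Measure.map · μ) (funext (mask_fam θ α hTT1))
  -- Step C : law of (η (2m), (η (2m - 1), fam T))
  have hstepC : μ.map (fun ω => (η (2 * m) ω, (η (2 * m - 1) ω, fam θ α T ω))) =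
      (haarAddCircle : Measure 𝕋).prod
        ((haarAddCircle : Measure 𝕋).prod (μ.map (fam θ α T))) := by
    set h : (ℤ ⊕ ℤ → 𝕋) → 𝕋 × (ℤ ⊕ ℤ → 𝕋) := fun y => (g' y, mask T y) with hhdef
    have hhm : Measurable h := hg'm.prodMk (measurable_mask T)
    have heq : (fun ω => (η (2 * m) ω, (η (2 * m - 1) ω, fam θ α T ω))) =
        (Prod.map id h) ∘ (fun ω => (η (2 * m) ω, fam θ α T' ω)) := by
      funext ω
      simp only [Function.comp_apply, Prod.map_apply, id_eq, hhdef, mask_fam θ α hTT']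
      refine congrArg _ (congrArg (fun z => (z, fam θ α T ω)) ?_)
      simp only [hη, hg'def, fam_apply_mem θ α hmem1, fam_apply_mem θ α hmem3,
        fam_apply_mem θ α hmem4, fam_apply_mem θ α hmem5, Sum.elim_inl, Sum.elim_inr]
    rw [heq, ← Measure.map_map (measurable_id.prodMap hhm) ((hηm _).prodMk hfamT'),
      hstepB, ← Measure.map_prod_map _ _ measurable_id hhm, Measure.map_id,
      Measure.map_map hhm hfamT']
    congr 1
    have : h ∘ fam θ α T' = fun ω => (η (2 * m - 1) ω, fam θ α T ω) := by
      funext ω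
      simp only [Function.comp_apply, hhdef, mask_fam θ α hTT']
      refine congrArg (fun z => (z, fam θ α T ω)) ?_
      simp only [hη, hg'def, fam_apply_mem θ α hmem1, fam_apply_mem θ α hmem3,
        fam_apply_mem θ α hmem4, fam_apply_mem θ α hmem5, Sum.elim_inl, Sum.elim_inr]
    rw [this, hstepD]
  -- Step E : reassociate
  have hassoc := (measurePreserving_prodAssoc (haarAddCircle : Measure 𝕋)
    (haarAddCircle : Measure 𝕋) (μ.map (fam θ α T))).symm
  have heq : (fun ω => (δ m ω, fam θ α T ω)) =
      (MeasurableEquiv.prodAssoc.symm : 𝕋 × 𝕋 × (ℤ ⊕ ℤ → 𝕋) ≃ᵐ (𝕋 × 𝕋) × (ℤ ⊕ ℤ → 𝕋)) ∘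
        (fun ω => (η (2 * m) ω, (η (2 * m - 1) ω, fam θ α T ω))) := by
    funext ω
    simp [MeasurableEquiv.prodAssoc, hδ, Equiv.prodAssoc]
  rw [heq, ← Measure.map_map (MeasurableEquiv.prodAssoc.symm.measurable)
    ((hηm _).prodMk ((hηm _).prodMk hfamT)), hstepC, hassoc.map_eq]

end

end DeltaIIDAux

/-- If the phases `θ_k, α_k` (`k ∈ ℤ`) are mutually independent and uniform on the torus
`𝕋 = ℝ/2πℤ`, then for any `λ ∈ ℝ` the vectors
`δ_k = (η_{2k}, η_{2k−1})` with `η_k = θ_k + θ_{k−1} + α_k − α_{k−1} + λ` are i.i.d.,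
uniformly distributed on `𝕋²`. -/
theorem delta_iid_uniform
    {Ω : Type*} [MeasurableSpace Ω] (μ : Measure Ω) [IsProbabilityMeasure μ]
    (θ α : ℤ → Ω → AddCircle (2 * Real.pi))
    (hmeas_θ : ∀ k, Measurable (θ k)) (hmeas_α : ∀ k, Measurable (α k))
    (hindep : iIndepFun (Sum.elim θ α) μ)
    (hunif_θ : ∀ k, μ.map (θ k) = haarAddCircle)
    (hunif_α : ∀ k, μ.map (α k) = haarAddCircle)
    (lam : ℝ)
    (η : ℤ → Ω → AddCircle (2 * Real.pi))
    (hη : ∀ k ω, η k ω = θ k ω + θ (k - 1) ω + α k ω - α (k - 1) ω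
      + (lam : AddCircle (2 * Real.pi)))
    (δ : ℤ → Ω → AddCircle (2 * Real.pi) × AddCircle (2 * Real.pi))
    (hδ : ∀ k ω, δ k ω = (η (2 * k) ω, η (2 * k - 1) ω)) :
    iIndepFun δ μ ∧
    ∀ k : ℤ, μ.map (δ k) =
      (haarAddCircle : Measure (AddCircle (2 * Real.pi))).prod haarAddCircle := by
  classical
  have hηm : ∀ j, Measurable (η j) := fun j => by
    have hj : η j = fun ω => θ j ω + θ (j - 1) ω + α j ω - α (j - 1) ω
        + ((lam : ℝ) : AddCircle (2 * Real.pi)) := funext (hη j)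
    rw [hj]; fun_prop (disch := first | exact hmeas_θ _ | exact hmeas_α _)
  have hδm : ∀ k, Measurable (δ k) := fun k => by
    have hk : δ k = fun ω => (η (2 * k) ω, η (2 * k - 1) ω) := funext (hδ k)
    rw [hk]; exact (hηm _).prodMk (hηm _)
  have hfam := DeltaIIDAux.measurable_fam θ α hmeas_θ hmeas_α
  -- marginal laws
  have hmarg : ∀ k : ℤ, μ.map (δ k) =
      (haarAddCircle : Measure (AddCircle (2 * Real.pi))).prod haarAddCircle := by
    intro k
    have hM := DeltaIIDAux.master θ α hmeas_θ hmeas_α hindep hunif_θ lam η hη δ hδ k ∅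
      (by simp) (by simp)
    haveI : IsProbabilityMeasure (μ.map (DeltaIIDAux.fam θ α (∅ : Finset (ℤ ⊕ ℤ)))) :=
      Measure.isProbabilityMeasure_map (hfam ∅).aemeasurable
    have h1 := congrArg (Measure.map Prod.fst) hM
    rw [Measure.map_map measurable_fst ((hδm k).prodMk (hfam ∅)),
      Measure.map_fst_prod, measure_univ, one_smul] at h1
    exact h1
  refine ⟨?_, hmarg⟩
  rw [iIndepFun_iff_measure_inter_preimage_eq_mul]
  intro S sets hsets
  revert hsets
  induction S using Finset.induction_on_max with
  | empty => intro _; simp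
  | insert a s hlt ih =>
    intro hsets
    have has : a ∉ s := fun h => lt_irrefl a (hlt a h)
    set T : Finset (ℤ ⊕ ℤ) := s.biUnion (fun k =>
      {Sum.inl (2 * k), Sum.inl (2 * k - 1), Sum.inl (2 * k - 1 - 1),
       Sum.inr (2 * k), Sum.inr (2 * k - 1), Sum.inr (2 * k - 1 - 1)}) with hTdef
    set Gk : ℤ → (ℤ ⊕ ℤ → AddCircle (2 * Real.pi)) →
        AddCircle (2 * Real.pi) × AddCircle (2 * Real.pi) := fun k y =>
      (y (Sum.inl (2 * k)) + y (Sum.inl (2 * k - 1)) + y (Sum.inr (2 * k))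
          - y (Sum.inr (2 * k - 1)) + (lam : AddCircle (2 * Real.pi)),
       y (Sum.inl (2 * k - 1)) + y (Sum.inl (2 * k - 1 - 1)) + y (Sum.inr (2 * k - 1))
          - y (Sum.inr (2 * k - 1 - 1)) + (lam : AddCircle (2 * Real.pi))) with hGdef
    have hGm : ∀ k, Measurable (Gk k) := fun k => by
      fun_prop (disch := exact measurable_pi_apply _)
    have hcomp : ∀ k ∈ s, (fun ω => Gk k (DeltaIIDAux.fam θ α T ω)) = δ k := by
      intro k hk
      have m1 : Sum.inl (2 * k) ∈ T := Finset.mem_biUnion.2 ⟨k, hk, by simp⟩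
      have m2 : Sum.inl (2 * k - 1) ∈ T := Finset.mem_biUnion.2 ⟨k, hk, by simp⟩
      have m3 : Sum.inl (2 * k - 1 - 1) ∈ T := Finset.mem_biUnion.2 ⟨k, hk, by simp⟩
      have m4 : Sum.inr (2 * k) ∈ T := Finset.mem_biUnion.2 ⟨k, hk, by simp⟩
      have m5 : Sum.inr (2 * k - 1) ∈ T := Finset.mem_biUnion.2 ⟨k, hk, by simp⟩
      have m6 : Sum.inr (2 * k - 1 - 1) ∈ T := Finset.mem_biUnion.2 ⟨k, hk, by simp⟩
      funext ω
      rw [hδ k ω, hη (2 * k) ω, hη (2 * k - 1) ω]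
      simp only [hGdef, DeltaIIDAux.fam_apply_mem θ α m1, DeltaIIDAux.fam_apply_mem θ α m2,
        DeltaIIDAux.fam_apply_mem θ α m3, DeltaIIDAux.fam_apply_mem θ α m4,
        DeltaIIDAux.fam_apply_mem θ α m5, DeltaIIDAux.fam_apply_mem θ α m6,
        Sum.elim_inl, Sum.elim_inr]
    set C : Set (ℤ ⊕ ℤ → AddCircle (2 * Real.pi)) := ⋂ i ∈ s, Gk i ⁻¹' sets i with hCdef
    have hBeq : (⋂ i ∈ s, δ i ⁻¹' sets i) = DeltaIIDAux.fam θ α T ⁻¹' C := by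
      rw [hCdef, Set.preimage_iInter₂]
      exact Set.iInter₂_congr fun i hi => by rw [← hcomp i hi]; rfl
    have hCmeas : MeasurableSet C := by
      rw [hCdef]
      exact MeasurableSet.biInter s.countable_toSet fun i hi =>
        (hGm i) (hsets i (Finset.mem_insert_of_mem hi))
    have hT1 : Sum.inl (2 * a) ∉ T := by
      intro h
      rw [hTdef, Finset.mem_biUnion] at h
      obtain ⟨k, hk, h⟩ := h
      have hka := hlt k hk
      simp only [Finset.mem_insert, Finset.mem_singleton, Sum.inl.injEq, reduceCtorEq,
        or_false] at h
      omega
    have hT2 : Sum.inl (2 * a - 1) ∉ T := by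
      intro h
      rw [hTdef, Finset.mem_biUnion] at h
      obtain ⟨k, hk, h⟩ := h
      have hka := hlt k hk
      simp only [Finset.mem_insert, Finset.mem_singleton, Sum.inl.injEq, reduceCtorEq,
        or_false] at h
      omega
    have hM := DeltaIIDAux.master θ α hmeas_θ hmeas_α hindep hunif_θ lam η hη δ hδ a T hT1 hT2
    haveI : IsProbabilityMeasure (μ.map (DeltaIIDAux.fam θ α T)) :=
      Measure.isProbabilityMeasure_map (hfam T).aemeasurable
    have hpairm : Measurable (fun ω => (δ a ω, DeltaIIDAux.fam θ α T ω)) :=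
      (hδm a).prodMk (hfam T)
    have hA : MeasurableSet (sets a) := hsets a (Finset.mem_insert_self a s)
    rw [Finset.set_biInter_insert, Finset.prod_insert has, hBeq]
    calc μ (δ a ⁻¹' sets a ∩ DeltaIIDAux.fam θ α T ⁻¹' C)
        = (μ.map (fun ω => (δ a ω, DeltaIIDAux.fam θ α T ω))) (sets a ×ˢ C) := by
          rw [Measure.map_apply hpairm (hA.prod hCmeas)]
          rfl
      _ = ((haarAddCircle : Measure (AddCircle (2 * Real.pi))).prod haarAddCircle) (sets a)
            * (μ.map (DeltaIIDAux.fam θ α T)) C := by rw [hM, Measure.prod_prod]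
      _ = μ (δ a ⁻¹' sets a) * μ (DeltaIIDAux.fam θ α T ⁻¹' C) := by
          rw [← hmarg a, Measure.map_apply (hδm a) hA,
            Measure.map_apply (hfam T) hCmeas]
      _ = μ (δ a ⁻¹' sets a) * ∏ i ∈ s, μ (δ i ⁻¹' sets i) := by
          rw [← hBeq, ih (fun i hi => hsets i (Finset.mem_insert_of_mem hi))]
end

section
/- Let 0 < t < 1 and r = √(1−t²). The 4×4 real matrix τ(T_{(π,π)}) has eigenvalues (r−1)²/t² and (r+1)²/t², each of multiplicity two. Since (r+1)²/t² > 1, the subgroup of GL₄(ℝ) generated by τ(T_{(π,π)}) is unbounded; in particular, every subgroup of GL₄(ℝ) containing τ(T_{(π,π)}) is not compact. -/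
open Matrix Complex Polynomial

/-- The algebra embedding `τ : M₂(ℂ) → M₄(ℝ)` replacing each entry `a` by the
`2×2` block `Re(a)I + Im(a)J`, with `J = [[0,1],[−1,0]]`. -/
noncomputable def tauMap (A : Matrix (Fin 2) (Fin 2) ℂ) : Matrix (Fin 4) (Fin 4) ℝ :=
  !![(A 0 0).re,  (A 0 0).im,  (A 0 1).re,  (A 0 1).im;
     -(A 0 0).im, (A 0 0).re,  -(A 0 1).im, (A 0 1).re;
     (A 1 0).re,  (A 1 0).im,  (A 1 1).re,  (A 1 1).im;
     -(A 1 0).im, (A 1 0).re,  -(A 1 1).im, (A 1 1).re]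

/-- The matrix `T_{(θ,η)}` built from transmission coefficient `t` and
reflection coefficient `r`. -/
noncomputable def Tmat (t r θ η : ℝ) : Matrix (Fin 2) (Fin 2) ℂ :=
  !![-Complex.exp (-Complex.I * θ),
     (Complex.I * r / t) * (Complex.exp (-Complex.I * θ) - 1);
     -(Complex.I * r / t) * (Complex.exp (-Complex.I * θ) - Complex.exp (Complex.I * (η - θ))),
     -((r : ℂ)^2 / (t : ℂ)^2) *
        (Complex.exp (-Complex.I * θ) - 1 - Complex.exp (Complex.I * (η - θ)))
       - (1 / (t : ℂ)^2) * Complex.exp (Complex.I * η)]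

lemma tau_eq (t r : ℝ) (ht : t ≠ 0) : tauMap (Tmat t r Real.pi Real.pi) =
    !![1, 0, 0, -(2*r/t);
       0, 1, 2*r/t, 0;
       0, 2*r/t, (3*r^2+1)/t^2, 0;
       -(2*r/t), 0, 0, (3*r^2+1)/t^2] := by
  have h1 : Complex.exp (-(Complex.I * ↑Real.pi)) = -1 := by
    rw [show Complex.I * ↑Real.pi = ↑Real.pi * Complex.I by ring, Complex.exp_neg,
      Complex.exp_pi_mul_I]
    norm_num
  have h2 : Complex.exp (Complex.I * (↑Real.pi - ↑Real.pi)) = 1 := by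
    rw [sub_self, mul_zero, Complex.exp_zero]
  have h3 : Complex.exp (Complex.I * ↑Real.pi) = -1 := by
    rw [mul_comm, Complex.exp_pi_mul_I]
  ext i j
  fin_cases i <;> fin_cases j <;>
    simp [tauMap, Tmat, h1, h2, h3, Complex.ext_iff, Complex.div_re, Complex.div_im,
      Complex.normSq, ht, ← Complex.ofReal_pow] <;> field_simp <;> ring

set_option maxHeartbeats 2000000 in
lemma my_det_fin_four {R : Type*} [CommRing R] (a b c d e f g h i j k l m n o p : R) :
    (!![a,b,c,d;e,f,g,h;i,j,k,l;m,n,o,p]).det =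
    a*(f*(k*p-l*o)-g*(j*p-l*n)+h*(j*o-k*n))
  - b*(e*(k*p-l*o)-g*(i*p-l*m)+h*(i*o-k*m))
  + c*(e*(j*p-l*n)-f*(i*p-l*m)+h*(i*n-j*m))
  - d*(e*(j*o-k*n)-f*(i*o-k*m)+g*(i*n-j*m)) := by
  simp [Matrix.det_succ_row_zero, Fin.sum_univ_succ, Fin.succAbove,
    show ((2:Fin 3).castSucc : Fin 4) = 2 from rfl]
  ring

lemma charpoly_eq (t r : ℝ) (ht : t ≠ 0) (hr2 : r^2 = 1 - t^2) :
    (!![1, 0, 0, -(2*r/t);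
       0, 1, 2*r/t, 0;
       0, 2*r/t, (3*r^2+1)/t^2, 0;
       -(2*r/t), 0, 0, (3*r^2+1)/t^2] : Matrix (Fin 4) (Fin 4) ℝ).charpoly =
      ((X - C ((r - 1) ^ 2 / t ^ 2)) * (X - C ((r + 1) ^ 2 / t ^ 2))) ^ 2 := by
  apply Polynomial.funext
  intro x
  rw [Matrix.charpoly, ← Polynomial.coe_evalRingHom, RingHom.map_det]
  have hm : (evalRingHom x).mapMatrix (charmatrix (!![1, 0, 0, -(2*r/t);
       0, 1, 2*r/t, 0;
       0, 2*r/t, (3*r^2+1)/t^2, 0;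
       -(2*r/t), 0, 0, (3*r^2+1)/t^2] : Matrix (Fin 4) (Fin 4) ℝ)) =
      !![x-1, 0, 0, 2*r/t;
         0, x-1, -(2*r/t), 0;
         0, -(2*r/t), x-(3*r^2+1)/t^2, 0;
         2*r/t, 0, 0, x-(3*r^2+1)/t^2] := by
    ext i j
    fin_cases i <;> fin_cases j <;>
      simp [charmatrix_apply, Matrix.one_apply, RingHom.mapMatrix_apply]
  rw [hm, my_det_fin_four]
  have key : (x-1)*(x - (3*r^2+1)/t^2) - (2*r/t)*(2*r/t)
      = (x - (r-1)^2/t^2)*(x - (r+1)^2/t^2) := by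
    have h4 : t^4 ≠ 0 := pow_ne_zero _ ht
    field_simp
    linear_combination ((r^2 - 1 - x*t^2) * (t^2+1) + (-(r^2*t^4) - r^2*t^2 - r^2 - x*t^6 + x*t^4 + x*t^2 + t^4 + t^2 + 1) + ((t^4-1)*r^2 + 1 - t^4 - t^2*x + t^6*x)) * hr2
  simp only [map_pow, _root_.map_mul, map_sub, coe_evalRingHom, eval_X, eval_C]
  calc _ = ((x-1)*(x - (3*r^2+1)/t^2) - (2*r/t)*(2*r/t))^2 := by ring
    _ = ((x - (r-1)^2/t^2)*(x - (r+1)^2/t^2))^2 := by rw [key]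

theorem tau_T_pi_pi_noncompact (t r : ℝ) (ht : 0 < t) (ht1 : t < 1)
    (hr : r = Real.sqrt (1 - t ^ 2)) :
    -- τ(T_{(π,π)}) has eigenvalues (r−1)²/t² and (r+1)²/t², each of multiplicity two
    (tauMap (Tmat t r Real.pi Real.pi)).charpoly =
      ((X - C ((r - 1) ^ 2 / t ^ 2)) * (X - C ((r + 1) ^ 2 / t ^ 2))) ^ 2 ∧
    -- the larger eigenvalue exceeds 1
    1 < (r + 1) ^ 2 / t ^ 2 ∧
    -- any subgroup of GL₄(ℝ) containing τ(T_{(π,π)}) is not compact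
    (∀ G : Subgroup (GL (Fin 4) ℝ),
      (∃ g ∈ G, (g : Matrix (Fin 4) (Fin 4) ℝ) = tauMap (Tmat t r Real.pi Real.pi)) →
      ¬ IsCompact (G : Set (GL (Fin 4) ℝ))) := by
  have ht0 : t ≠ 0 := ne_of_gt ht
  have hr0 : 0 ≤ r := hr ▸ Real.sqrt_nonneg _
  have hr2 : r ^ 2 = 1 - t ^ 2 := by
    rw [hr]; exact Real.sq_sqrt (by nlinarith)
  have hM : tauMap (Tmat t r Real.pi Real.pi) =
      !![1, 0, 0, -(2*r/t);
         0, 1, 2*r/t, 0;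
         0, 2*r/t, (3*r^2+1)/t^2, 0;
         -(2*r/t), 0, 0, (3*r^2+1)/t^2] := tau_eq t r ht0
  have hb : 1 < (r + 1) ^ 2 / t ^ 2 := by
    rw [lt_div_iff₀ (by positivity)]
    nlinarith
  refine ⟨by rw [hM]; exact charpoly_eq t r ht0 hr2, hb, ?_⟩
  rintro G ⟨g, hgG, hg⟩ hK
  set N : Matrix (Fin 4) (Fin 4) ℝ := tauMap (Tmat t r Real.pi Real.pi) with hN
  set b : ℝ := (r + 1) ^ 2 / t ^ 2 with hbdef
  set c : ℝ := 2 * r / t with hcdef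
  set v : Fin 4 → ℝ := ![0, c, b - 1, 0] with hv
  have hb1 : 0 < b - 1 := by linarith
  have hmv : N.mulVec v = b • v := by
    rw [hM]
    ext i
    fin_cases i <;>
      simp [hv, Matrix.mulVec, dotProduct, Fin.sum_univ_four, hcdef, hbdef] <;>
      field_simp <;> ring_nf <;>
      first
        | linear_combination (2*r^2*t^6 + 2*r*t^6) * hr2
        | linear_combination (2*r^2 + 2*r) * hr2
  have hpow : ∀ n : ℕ, (N ^ n).mulVec v = b ^ n • v := by
    intro n
    induction n with
    | zero => simp
    | succ n ih =>
        rw [pow_succ', ← Matrix.mulVec_mulVec, ih, Matrix.mulVec_smul, hmv, smul_smul,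
          pow_succ]
  -- the continuous "size" function on GL
  set φ : GL (Fin 4) ℝ → ℝ := fun u => |(u : Matrix (Fin 4) (Fin 4) ℝ) 2 1| + |(u : Matrix (Fin 4) (Fin 4) ℝ) 2 2| with hφ
  have hφc : Continuous φ := by
    apply Continuous.add <;> apply Continuous.abs <;>
      exact (Units.continuous_val.matrix_elem _ _)
  obtain ⟨x, -, hx⟩ := hK.exists_isMaxOn ⟨g, hgG⟩ hφc.continuousOn
  set C : ℝ := φ x with hC
  have hbound : ∀ n : ℕ, |(N ^ n) 2 1| ≤ C ∧ |(N ^ n) 2 2| ≤ C := by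
    intro n
    have hgn : (g ^ n : GL (Fin 4) ℝ) ∈ (G : Set (GL (Fin 4) ℝ)) := pow_mem hgG n
    have hval : ((g ^ n : GL (Fin 4) ℝ) : Matrix (Fin 4) (Fin 4) ℝ) = N ^ n := by
      rw [Units.val_pow_eq_pow_val, hg]
    have h := hx hgn
    simp only [hφ, Set.mem_setOf_eq, hval] at h
    have h' : |(N ^ n) 2 1| + |(N ^ n) 2 2| ≤ C := h
    constructor <;> [linarith [abs_nonneg ((N ^ n) 2 2), h']; linarith [abs_nonneg ((N ^ n) 2 1), h']]
  have key : ∀ n : ℕ, b ^ n * (b - 1) ≤ C * (|c| + (b - 1)) := by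
    intro n
    have h2 : ((N ^ n).mulVec v) 2 = (N ^ n) 2 1 * c + (N ^ n) 2 2 * (b - 1) := by
      simp [Matrix.mulVec, dotProduct, Fin.sum_univ_four, hv]
    have h3 : ((N ^ n).mulVec v) 2 = b ^ n * (b - 1) := by rw [hpow n]; simp [hv]
    obtain ⟨hb21, hb22⟩ := hbound n
    have habs : b ^ n * (b - 1) ≤ |(N ^ n) 2 1 * c| + |(N ^ n) 2 2 * (b - 1)| := by
      rw [← h3, h2]
      exact le_trans (le_abs_self _) (abs_add_le _ _)
    have h21 : |(N ^ n) 2 1 * c| ≤ C * |c| := by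
      rw [abs_mul]
      exact mul_le_mul_of_nonneg_right hb21 (abs_nonneg _)
    have h22 : |(N ^ n) 2 2 * (b - 1)| ≤ C * (b - 1) := by
      rw [abs_mul, abs_of_pos hb1]
      exact mul_le_mul_of_nonneg_right hb22 hb1.le
    calc b ^ n * (b - 1) ≤ |(N ^ n) 2 1 * c| + |(N ^ n) 2 2 * (b - 1)| := habs
      _ ≤ C * |c| + C * (b - 1) := add_le_add h21 h22
      _ = C * (|c| + (b - 1)) := by ring
  obtain ⟨n, hn⟩ := pow_unbounded_of_one_lt (C * (|c| + (b - 1)) / (b - 1)) hb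
  rw [div_lt_iff₀ hb1] at hn
  linarith [key n]
end

section
/- Let (φ_n)_{n∈ℤ} be an orthonormal basis of a separable complex Hilbert space H, let p ∈ ℕ, and let U be a bounded normal operator on H with band structure of order 2p+1, i.e. ⟨φ_j, U φ_k⟩ = 0 whenever |j−k| > p. Let z ∈ ℂ belong to the resolvent set of U, and let c = (c_k)_{k∈ℤ} ∈ ℂ^ℤ be a nonzero sequence satisfying the formal eigenvalue equation: for every j ∈ ℤ, Σ_{k: |k−j| ≤ p} ⟨φ_j, U φ_k⟩ c_k = z c_j. Then the sequence (c_k) is not polynomially bounded: there exist no constants C > 0 and m ∈ ℕ such that |c_k| ≤ C(1+|k|)^m for all k ∈ ℤ. -/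
open Filter

lemma onormsum_aux {E : Type*} [NormedAddCommGroup E] [InnerProductSpace ℂ E]
    {ι : Type*} {v : ι → E} (hv : Orthonormal ℂ v) (l : ι → ℂ) (s : Finset ι) :
    ‖∑ i ∈ s, l i • v i‖ ^ 2 = ∑ i ∈ s, ‖l i‖ ^ 2 := by
  have h : (inner ℂ (∑ i ∈ s, l i • v i) (∑ i ∈ s, l i • v i) : ℂ)
      = ∑ i ∈ s, ((‖l i‖ : ℂ)) ^ 2 := by
    rw [sum_inner]
    refine Finset.sum_congr rfl fun i hi => ?_
    rw [inner_smul_left, hv.inner_right_sum l hi, RCLike.conj_mul]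
    norm_cast
  rw [inner_self_eq_norm_sq_to_K] at h
  exact Complex.ofReal_injective (by push_cast; exact h)

set_option maxHeartbeats 1600000

/-- A formal (generalized) eigenvector of a banded normal operator for a point `z` of the
resolvent set is never polynomially bounded. -/
theorem banded_normal_resolvent_eigenvector_not_poly_bounded
    {H : Type*} [NormedAddCommGroup H] [InnerProductSpace ℂ H] [CompleteSpace H]
    (b : HilbertBasis ℤ ℂ H) (p : ℕ) (U : H →L[ℂ] H) (hnormal : IsStarNormal U)
    (hband : ∀ j k : ℤ, (p : ℤ) < |j - k| → inner (𝕜 := ℂ) (b j) (U (b k)) = 0)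
    (z : ℂ) (hz : z ∉ spectrum ℂ U)
    (c : ℤ → ℂ) (hc0 : c ≠ 0)
    (hc : ∀ j : ℤ, ∑ k ∈ Finset.Icc (j - (p : ℤ)) (j + (p : ℤ)),
      inner (𝕜 := ℂ) (b j) (U (b k)) * c k = z * c j) :
    ¬ ∃ (C : ℝ) (m : ℕ), 0 < C ∧
      ∀ k : ℤ, ‖c k‖ ≤ C * ((1 : ℝ) + |(k : ℝ)|) ^ m := by
  rintro ⟨C, m, hC, hpoly⟩
  classical
  set a : ℤ → ℤ → ℂ := fun j k => inner (𝕜 := ℂ) (b j) (U (b k)) with ha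
  set q : ℤ := (p : ℤ) + 1 with hqdef
  have hq1 : 1 ≤ q := by omega
  have hband' : ∀ j k : ℤ, q ≤ |j - k| → a j k = 0 := fun j k h =>
    hband j k (by omega)
  -- the eigenvalue equation with the slightly larger window
  have hc' : ∀ j : ℤ, ∑ k ∈ Finset.Icc (j - q) (j + q), a j k * c k = z * c j := by
    intro j
    rw [← hc j]
    symm
    apply Finset.sum_subset
    · intro k hk
      simp only [Finset.mem_Icc] at *
      omega
    · intro k hk hk2
      simp only [Finset.mem_Icc] at hk hk2
      have : (p : ℤ) < |j - k| := by rw [lt_abs]; omega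
      rw [hband j k this, zero_mul]
  -- the resolvent bound
  have hunit : IsUnit (algebraMap ℂ (H →L[ℂ] H) z - U) := spectrum.notMem_iff.mp hz
  obtain ⟨u, hu⟩ := hunit
  set M : ℝ := ‖((u⁻¹ : (H →L[ℂ] H)ˣ) : H →L[ℂ] H)‖ with hMdef
  have hM0 : 0 ≤ M := norm_nonneg _
  have hM : ∀ x : H, ‖x‖ ≤ M * ‖z • x - U x‖ := by
    intro x
    have h1 : ((u⁻¹ : (H →L[ℂ] H)ˣ) : H →L[ℂ] H) ((u : H →L[ℂ] H) x) = x := by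
      rw [← ContinuousLinearMap.mul_apply, u.inv_mul, ContinuousLinearMap.one_apply]
    have hTx : (u : H →L[ℂ] H) x = z • x - U x := by
      rw [hu]; simp [Algebra.algebraMap_eq_smul_one]
    calc ‖x‖ = ‖((u⁻¹ : (H →L[ℂ] H)ˣ) : H →L[ℂ] H) ((u : H →L[ℂ] H) x)‖ := by rw [h1]
      _ ≤ M * ‖(u : H →L[ℂ] H) x‖ := ContinuousLinearMap.le_opNorm _ _
      _ = M * ‖z • x - U x‖ := by rw [hTx]
  -- expansion of U (b k)
  have hUb : ∀ k : ℤ, U (b k) = ∑ j ∈ Finset.Icc (k - q) (k + q), a j k • b j := by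
    intro k
    have h1 : HasSum (fun j => a j k • b j) (U (b k)) := by
      have h2 := b.hasSum_repr (U (b k))
      convert h2 using 2 with j
      rw [b.repr_apply_apply]
    refine (h1.unique (hasSum_sum_of_ne_finset_zero fun j hj => ?_))
    have : a j k = 0 := by
      apply hband'
      simp only [Finset.mem_Icc] at hj
      rw [le_abs]; omega
    rw [this, zero_smul]
  have haU : ∀ j k : ℤ, ‖a j k‖ ≤ ‖U‖ := by
    intro j k
    calc ‖a j k‖ ≤ ‖b j‖ * ‖U (b k)‖ := norm_inner_le_norm _ _
      _ = ‖U (b k)‖ := by rw [b.orthonormal.1 j, one_mul]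
      _ ≤ ‖U‖ * ‖b k‖ := U.le_opNorm _
      _ = ‖U‖ := by rw [b.orthonormal.1 k, mul_one]
  -- the quadratic sums
  set S : ℤ → ℝ := fun R => ∑ k ∈ Finset.Icc (-R) R, ‖c k‖ ^ 2 with hSdef
  have hSnonneg : ∀ R, 0 ≤ S R := fun R => Finset.sum_nonneg fun k _ => sq_nonneg _
  have hSmono : ∀ {R R' : ℤ}, R ≤ R' → S R ≤ S R' := by
    intro R R' h
    apply Finset.sum_le_sum_of_subset_of_nonneg
    · intro k hk; simp only [Finset.mem_Icc] at *; omega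
    · exact fun k _ _ => sq_nonneg _
  set B : ℝ := (‖z‖ + ‖U‖) * (4 * q) with hBdef
  have hB0 : 0 ≤ B := by
    apply mul_nonneg (by positivity)
    have : (0:ℝ) ≤ (q:ℝ) := by exact_mod_cast (by omega : (0:ℤ) ≤ q)
    linarith
  set A : ℝ := (M * B) ^ 2 * (8 * q) with hAdef
  have hA0 : 0 ≤ A := by
    apply mul_nonneg (sq_nonneg _)
    have : (0:ℝ) ≤ (q:ℝ) := by exact_mod_cast (by omega : (0:ℤ) ≤ q)
    linarith
  -- the key estimate
  have key : ∀ R : ℤ, 2 * q ≤ R → S R ≤ A * (S (R + 2 * q) - S (R - 2 * q)) := by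
    intro R hR
    set F := Finset.Icc (-R) R with hF
    set J := Finset.Icc (-(R + q)) (R + q) with hJ
    set I := Finset.Icc (-(R - q)) (R - q) with hI
    set G := J \ I with hG
    set W := Finset.Icc (-(R + 2*q)) (R + 2*q) \ Finset.Icc (-(R - 2*q)) (R - 2*q) with hW
    set v : H := ∑ k ∈ F, c k • b k with hv
    set d : ℤ → ℂ := fun j => (if j ∈ F then z * c j else 0) - ∑ k ∈ F, c k * a j k with hd
    have hFJ : F ⊆ J := by
      intro x hx; simp only [hF, hJ, Finset.mem_Icc] at *; omega
    have hIJ : I ⊆ J := by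
      intro x hx; simp only [hI, hJ, Finset.mem_Icc] at *; omega
    have hSig : (0:ℝ) ≤ ∑ k ∈ W, ‖c k‖ := Finset.sum_nonneg fun k _ => norm_nonneg _
    have h1 : z • v = ∑ j ∈ J, (if j ∈ F then z * c j else 0) • b j := by
      rw [hv, Finset.smul_sum,
        ← Finset.sum_subset hFJ (fun x _ hx => by rw [if_neg hx, zero_smul])]
      exact Finset.sum_congr rfl fun j hj => by rw [if_pos hj, smul_smul]
    have h2 : U v = ∑ j ∈ J, (∑ k ∈ F, c k * a j k) • b j := by
      rw [hv, map_sum]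
      have h3 : ∀ k ∈ F, U (c k • b k) = ∑ j ∈ J, (c k * a j k) • b j := by
        intro k hk
        simp only [hF, Finset.mem_Icc] at hk
        have hsubJ : Finset.Icc (k-q) (k+q) ⊆ J := by
          intro x hx; simp only [hJ, Finset.mem_Icc] at *; omega
        have hzero : ∀ j ∈ J, j ∉ Finset.Icc (k-q) (k+q) → (c k * a j k) • b j = 0 := by
          intro j _ hj
          have h0 : a j k = 0 := by
            apply hband'
            simp only [Finset.mem_Icc] at hj
            rw [le_abs]; omega
          rw [h0, mul_zero, zero_smul]
        rw [map_smul, hUb k, Finset.smul_sum, ← Finset.sum_subset hsubJ hzero]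
        exact Finset.sum_congr rfl fun j _ => by rw [smul_smul]
      rw [Finset.sum_congr rfl h3, Finset.sum_comm]
      exact Finset.sum_congr rfl fun j _ => (Finset.sum_smul).symm
    have hdI : ∀ j ∈ I, d j = 0 := by
      intro j hj
      simp only [hI, Finset.mem_Icc] at hj
      have hjF : j ∈ F := by simp only [hF, Finset.mem_Icc]; omega
      have h4 : ∑ k ∈ F, c k * a j k = ∑ k ∈ Finset.Icc (j - q) (j + q), c k * a j k := by
        symm
        apply Finset.sum_subset
        · intro k hk; simp only [hF, Finset.mem_Icc] at *; omega
        · intro k hkF hk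
          have h0 : a j k = 0 := by
            apply hband'
            simp only [Finset.mem_Icc] at hk
            rw [le_abs]; omega
          rw [h0, mul_zero]
      have h5 : ∑ k ∈ Finset.Icc (j - q) (j + q), c k * a j k = z * c j := by
        rw [← hc' j]; exact Finset.sum_congr rfl fun k _ => mul_comm _ _
      show (if j ∈ F then z * c j else 0) - ∑ k ∈ F, c k * a j k = 0
      rw [if_pos hjF, h4, h5, sub_self]
    have hTv : z • v - U v = ∑ j ∈ G, d j • b j := by
      rw [h1, h2, ← Finset.sum_sub_distrib]
      rw [Finset.sum_congr rfl (fun j _ => (sub_smul ((if j ∈ F then z * c j else 0))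
        (∑ k ∈ F, c k * a j k) (b j)).symm)]
      symm
      apply Finset.sum_subset Finset.sdiff_subset
      intro j hjJ hjG
      have hjI : j ∈ I := by
        by_contra hni
        exact hjG (Finset.mem_sdiff.mpr ⟨hjJ, hni⟩)
      rw [hdI j hjI, zero_smul]
    have hdG : ∀ j ∈ G, ‖d j‖ ≤ (‖z‖ + ‖U‖) * ∑ k ∈ W, ‖c k‖ := by
      intro j hj
      rw [hG, Finset.mem_sdiff] at hj
      obtain ⟨hjJ, hjI⟩ := hj
      simp only [hJ, Finset.mem_Icc] at hjJ
      simp only [hI, Finset.mem_Icc] at hjI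
      have hterm1 : ‖(if j ∈ F then z * c j else 0)‖ ≤ ‖z‖ * ∑ k ∈ W, ‖c k‖ := by
        by_cases hjF : j ∈ F
        · simp only [hF, Finset.mem_Icc] at hjF
          rw [if_pos (by simp only [hF, Finset.mem_Icc]; omega), norm_mul]
          apply mul_le_mul_of_nonneg_left _ (norm_nonneg z)
          apply Finset.single_le_sum (fun k _ => norm_nonneg (c k))
          simp only [hW, Finset.mem_sdiff, Finset.mem_Icc]
          omega
        · rw [if_neg hjF, norm_zero]
          positivity
      have h6 : ∑ k ∈ F, c k * a j k = ∑ k ∈ F ∩ Finset.Icc (j - q) (j + q), c k * a j k := by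
        symm
        apply Finset.sum_subset Finset.inter_subset_left
        intro k hkF hk
        have hk' : k ∉ Finset.Icc (j - q) (j + q) := fun hmem => hk (Finset.mem_inter.mpr ⟨hkF, hmem⟩)
        have h0 : a j k = 0 := by
          apply hband'
          simp only [Finset.mem_Icc] at hk'
          rw [le_abs]; omega
        rw [h0, mul_zero]
      have hsub : F ∩ Finset.Icc (j - q) (j + q) ⊆ W := by
        intro k hk
        simp only [hF, Finset.mem_inter, Finset.mem_Icc] at hk
        simp only [hW, Finset.mem_sdiff, Finset.mem_Icc]
        omega
      have hterm2 : ‖∑ k ∈ F, c k * a j k‖ ≤ ‖U‖ * ∑ k ∈ W, ‖c k‖ := by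
        rw [h6]
        calc ‖∑ k ∈ F ∩ Finset.Icc (j - q) (j + q), c k * a j k‖
            ≤ ∑ k ∈ F ∩ Finset.Icc (j - q) (j + q), ‖c k * a j k‖ := norm_sum_le _ _
          _ ≤ ∑ k ∈ F ∩ Finset.Icc (j - q) (j + q), ‖c k‖ * ‖U‖ := by
              refine Finset.sum_le_sum fun k _ => ?_
              rw [norm_mul]
              exact mul_le_mul_of_nonneg_left (haU j k) (norm_nonneg _)
          _ ≤ ∑ k ∈ W, ‖c k‖ * ‖U‖ := by
              refine Finset.sum_le_sum_of_subset_of_nonneg hsub fun k _ _ => ?_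
              positivity
          _ = ‖U‖ * ∑ k ∈ W, ‖c k‖ := by rw [← Finset.sum_mul, mul_comm]
      calc ‖d j‖ ≤ ‖(if j ∈ F then z * c j else 0)‖ + ‖∑ k ∈ F, c k * a j k‖ := norm_sub_le _ _
        _ ≤ ‖z‖ * ∑ k ∈ W, ‖c k‖ + ‖U‖ * ∑ k ∈ W, ‖c k‖ := add_le_add hterm1 hterm2
        _ = (‖z‖ + ‖U‖) * ∑ k ∈ W, ‖c k‖ := by ring
    have hcardG : (G.card : ℝ) ≤ 4 * (q : ℝ) := by
      have h7 : G.card = J.card - I.card := Finset.card_sdiff_of_subset hIJ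
      have hJc : J.card = (R + q + 1 - -(R + q)).toNat := Int.card_Icc _ _
      have hIc : I.card = (R - q + 1 - -(R - q)).toNat := Int.card_Icc _ _
      have : (G.card : ℤ) ≤ 4 * q := by omega
      exact_mod_cast this
    have hcardW : (W.card : ℝ) ≤ 8 * (q : ℝ) := by
      have hsub2 : Finset.Icc (-(R - 2*q)) (R - 2*q) ⊆ Finset.Icc (-(R + 2*q)) (R + 2*q) := by
        intro x hx; simp only [Finset.mem_Icc] at *; omega
      have h7 : W.card = (Finset.Icc (-(R + 2*q)) (R + 2*q)).card
          - (Finset.Icc (-(R - 2*q)) (R - 2*q)).card := Finset.card_sdiff_of_subset hsub2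
      have hJc := Int.card_Icc (-(R + 2*q)) (R + 2*q)
      have hIc := Int.card_Icc (-(R - 2*q)) (R - 2*q)
      have : (W.card : ℤ) ≤ 8 * q := by omega
      exact_mod_cast this
    have hvnorm : ‖v‖ ^ 2 = S R := by
      rw [hv]; exact onormsum_aux b.orthonormal c F
    have hTvnorm : ‖z • v - U v‖ ≤ B * ∑ k ∈ W, ‖c k‖ := by
      rw [hTv]
      calc ‖∑ j ∈ G, d j • b j‖ ≤ ∑ j ∈ G, ‖d j • b j‖ := norm_sum_le _ _
        _ = ∑ j ∈ G, ‖d j‖ := by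
            refine Finset.sum_congr rfl fun j _ => ?_
            rw [norm_smul, b.orthonormal.1 j, mul_one]
        _ ≤ ∑ j ∈ G, (‖z‖ + ‖U‖) * ∑ k ∈ W, ‖c k‖ := Finset.sum_le_sum hdG
        _ = (G.card : ℝ) * ((‖z‖ + ‖U‖) * ∑ k ∈ W, ‖c k‖) := by
            rw [Finset.sum_const, nsmul_eq_mul]
        _ ≤ (4 * (q : ℝ)) * ((‖z‖ + ‖U‖) * ∑ k ∈ W, ‖c k‖) := by
            apply mul_le_mul_of_nonneg_right hcardG
            exact mul_nonneg (by positivity) hSig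
        _ = B * ∑ k ∈ W, ‖c k‖ := by rw [hBdef]; ring
    have h8 : ‖v‖ ≤ M * (B * ∑ k ∈ W, ‖c k‖) :=
      (hM v).trans (mul_le_mul_of_nonneg_left hTvnorm hM0)
    have h9 : S R ≤ (M * B) ^ 2 * (∑ k ∈ W, ‖c k‖) ^ 2 := by
      rw [← hvnorm, show (M * B) ^ 2 * (∑ k ∈ W, ‖c k‖) ^ 2
        = (M * (B * ∑ k ∈ W, ‖c k‖)) ^ 2 from by ring]
      exact pow_le_pow_left₀ (norm_nonneg v) h8 2
    have h10 : (∑ k ∈ W, ‖c k‖) ^ 2 ≤ (W.card : ℝ) * ∑ k ∈ W, ‖c k‖ ^ 2 :=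
      sq_sum_le_card_mul_sum_sq
    have h11 : ∑ k ∈ W, ‖c k‖ ^ 2 = S (R + 2 * q) - S (R - 2 * q) := by
      have hsub2 : Finset.Icc (-(R - 2*q)) (R - 2*q) ⊆ Finset.Icc (-(R + 2*q)) (R + 2*q) := by
        intro x hx; simp only [Finset.mem_Icc] at *; omega
      have h12 := Finset.sum_sdiff (f := fun k => ‖c k‖ ^ 2) hsub2
      have e1 : S (R + 2 * q) = ∑ k ∈ Finset.Icc (-(R + 2*q)) (R + 2*q), ‖c k‖ ^ 2 := rfl
      have e2 : S (R - 2 * q) = ∑ k ∈ Finset.Icc (-(R - 2*q)) (R - 2*q), ‖c k‖ ^ 2 := rfl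
      rw [hW]; rw [e1, e2]; linarith [h12]
    have hdiff0 : (0:ℝ) ≤ S (R + 2 * q) - S (R - 2 * q) := by
      rw [← h11]; exact Finset.sum_nonneg fun k _ => sq_nonneg _
    calc S R ≤ (M * B) ^ 2 * (∑ k ∈ W, ‖c k‖) ^ 2 := h9
      _ ≤ (M * B) ^ 2 * ((W.card : ℝ) * (S (R + 2 * q) - S (R - 2 * q))) := by
          apply mul_le_mul_of_nonneg_left _ (sq_nonneg _)
          rw [← h11]; exact h10
      _ ≤ (M * B) ^ 2 * ((8 * (q : ℝ)) * (S (R + 2 * q) - S (R - 2 * q))) := by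
          apply mul_le_mul_of_nonneg_left _ (sq_nonneg _)
          exact mul_le_mul_of_nonneg_right hcardW hdiff0
      _ = A * (S (R + 2 * q) - S (R - 2 * q)) := by rw [hAdef]; ring
  -- a nonzero coefficient
  obtain ⟨k0, hk0⟩ : ∃ k, c k ≠ 0 := by
    by_contra h
    push_neg at h
    exact hc0 (funext h)
  set ε : ℝ := ‖c k0‖ ^ 2 with hedef
  have he : 0 < ε := by
    have : 0 < ‖c k0‖ := norm_pos_iff.mpr hk0
    positivity
  set R0 : ℤ := |k0| with hR0def
  have hR00 : 0 ≤ R0 := abs_nonneg _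
  have hR00' : (0:ℝ) ≤ (R0:ℝ) := by exact_mod_cast hR00
  have hq1' : (1:ℝ) ≤ (q:ℝ) := by exact_mod_cast hq1
  have hSR0 : ε ≤ S R0 := by
    apply Finset.single_le_sum (fun k _ => sq_nonneg ‖c k‖)
    simp only [Finset.mem_Icc]
    exact ⟨neg_abs_le k0, le_abs_self k0⟩
  have key2 : ∀ r : ℤ, 0 ≤ r → (A + 1) * S r ≤ A * S (r + 4 * q) := by
    intro r hr
    have h1 := key (r + 2 * q) (by omega)
    have e1 : r + 2 * q + 2 * q = r + 4 * q := by ring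
    have e2 : r + 2 * q - 2 * q = r := by ring
    rw [e1, e2] at h1
    have h2 : S r ≤ S (r + 2 * q) := hSmono (by omega)
    nlinarith [hSnonneg r]
  have hargnn : ∀ n : ℕ, (0:ℤ) ≤ R0 + 4 * q * (n : ℤ) := fun n =>
    add_nonneg hR00 (mul_nonneg (by omega) (Int.natCast_nonneg n))
  have ind : ∀ n : ℕ, (A + 1) ^ n * ε ≤ A ^ n * S (R0 + 4 * q * (n : ℤ)) := by
    intro n
    induction n with
    | zero => simpa using hSR0
    | succ n ih =>
      have h1 := key2 (R0 + 4 * q * (n : ℤ)) (hargnn n)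
      have e3 : R0 + 4 * q * (n : ℤ) + 4 * q = R0 + 4 * q * ((n + 1 : ℕ) : ℤ) := by
        push_cast; ring
      rw [e3] at h1
      calc (A + 1) ^ (n + 1) * ε = (A + 1) * ((A + 1) ^ n * ε) := by ring
        _ ≤ (A + 1) * (A ^ n * S (R0 + 4 * q * (n : ℤ))) :=
            mul_le_mul_of_nonneg_left ih (by linarith)
        _ = A ^ n * ((A + 1) * S (R0 + 4 * q * (n : ℤ))) := by ring
        _ ≤ A ^ n * (A * S (R0 + 4 * q * ((n + 1 : ℕ) : ℤ))) :=
            mul_le_mul_of_nonneg_left h1 (pow_nonneg hA0 n)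
        _ = A ^ (n + 1) * S (R0 + 4 * q * ((n + 1 : ℕ) : ℤ)) := by ring
  have hApos : 0 < A := by
    rcases lt_or_eq_of_le hA0 with h | h
    · exact h
    · exfalso
      have h1 := ind 1
      rw [← h] at h1
      simp only [pow_one, zero_mul, zero_add, one_mul] at h1
      linarith
  set θ : ℝ := (A + 1) / A with hthdef
  have hθ1 : 1 < θ := (one_lt_div hApos).mpr (by linarith)
  have hθ0 : 0 < θ := by linarith
  have hlow : ∀ n : ℕ, θ ^ n * ε ≤ S (R0 + 4 * q * (n : ℤ)) := by
    intro n
    rw [hthdef, div_pow, div_mul_eq_mul_div, div_le_iff₀ (pow_pos hApos n)]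
    calc (A + 1) ^ n * ε ≤ A ^ n * S (R0 + 4 * q * (n : ℤ)) := ind n
      _ = S (R0 + 4 * q * (n : ℤ)) * A ^ n := by ring
  -- polynomial upper bound for S
  have hpolyS : ∀ R : ℤ, 0 ≤ R → S R ≤ 2 * C ^ 2 * (1 + (R:ℝ)) ^ (2 * m + 1) := by
    intro R hR
    have hRr : (0:ℝ) ≤ (R:ℝ) := by exact_mod_cast hR
    have hterm : ∀ k ∈ Finset.Icc (-R) R, ‖c k‖ ^ 2 ≤ C ^ 2 * (1 + (R:ℝ)) ^ (2 * m) := by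
      intro k hk
      simp only [Finset.mem_Icc] at hk
      have h1 : |(k:ℝ)| ≤ (R:ℝ) := by
        rw [← Int.cast_abs]
        exact_mod_cast (abs_le.mpr ⟨hk.1, hk.2⟩)
      have h2 : ‖c k‖ ≤ C * (1 + (R:ℝ)) ^ m := by
        refine (hpoly k).trans ?_
        apply mul_le_mul_of_nonneg_left _ hC.le
        apply pow_le_pow_left₀ (by positivity) (by linarith)
      have h3 : ‖c k‖ = ‖c k‖ := rfl
      rw [h3]
      calc ‖c k‖ ^ 2 ≤ (C * (1 + (R:ℝ)) ^ m) ^ 2 :=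
            pow_le_pow_left₀ (norm_nonneg _) h2 2
        _ = C ^ 2 * (1 + (R:ℝ)) ^ (2 * m) := by
            rw [mul_pow, ← pow_mul, mul_comm m 2]
    calc S R ≤ (Finset.Icc (-R) R).card • (C ^ 2 * (1 + (R:ℝ)) ^ (2 * m)) :=
          Finset.sum_le_card_nsmul _ _ _ hterm
      _ = ((Finset.Icc (-R) R).card : ℝ) * (C ^ 2 * (1 + (R:ℝ)) ^ (2 * m)) :=
          nsmul_eq_mul _ _
      _ ≤ (2 * (R:ℝ) + 1) * (C ^ 2 * (1 + (R:ℝ)) ^ (2 * m)) := by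
          apply mul_le_mul_of_nonneg_right _ (by positivity)
          have hcard := Int.card_Icc (-R) R
          have h4 : ((Finset.Icc (-R) R).card : ℤ) ≤ 2 * R + 1 := by omega
          have h5 : (((Finset.Icc (-R) R).card : ℤ) : ℝ) ≤ ((2 * R + 1 : ℤ) : ℝ) := by
            exact_mod_cast h4
          push_cast at h5
          exact h5
      _ ≤ 2 * C ^ 2 * (1 + (R:ℝ)) ^ (2 * m + 1) := by
          have hX : (0:ℝ) ≤ (1 + (R:ℝ)) ^ (2 * m) := by positivity
          have hps : (1 + (R:ℝ)) ^ (2 * m + 1) = (1 + (R:ℝ)) ^ (2 * m) * (1 + (R:ℝ)) :=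
            pow_succ _ _
          nlinarith [mul_nonneg (sq_nonneg C) hX]
  -- contradiction: exponential vs polynomial growth
  set K' : ℝ := 2 * C ^ 2 * (1 + (R0:ℝ) + 4 * (q:ℝ)) ^ (2 * m + 1) with hKdef
  have hK0 : 0 < K' := by
    have hb : (0:ℝ) < 1 + (R0:ℝ) + 4 * (q:ℝ) := by linarith
    positivity
  have hup : ∀ n : ℕ, 1 ≤ n → θ ^ n * ε ≤ K' * (n:ℝ) ^ (2 * m + 1) := by
    intro n hn
    have hn' : (1:ℝ) ≤ (n:ℝ) := by exact_mod_cast hn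
    have h1 := hlow n
    have h2 := hpolyS (R0 + 4 * q * (n : ℤ)) (hargnn n)
    have h3 : 1 + ((R0 + 4 * q * (n : ℤ) : ℤ) : ℝ) ≤ (1 + (R0:ℝ) + 4 * (q:ℝ)) * (n:ℝ) := by
      push_cast
      nlinarith [mul_nonneg (by linarith : (0:ℝ) ≤ 1 + (R0:ℝ)) (by linarith : (0:ℝ) ≤ (n:ℝ) - 1),
        mul_nonneg (by linarith : (0:ℝ) ≤ 4 * (q:ℝ)) (by linarith : (0:ℝ) ≤ (n:ℝ) - 1)]
    have hbase : (0:ℝ) ≤ 1 + ((R0 + 4 * q * (n : ℤ) : ℤ) : ℝ) := by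
      have := hargnn n
      have : (0:ℝ) ≤ ((R0 + 4 * q * (n : ℤ) : ℤ) : ℝ) := by exact_mod_cast this
      linarith
    calc θ ^ n * ε ≤ S (R0 + 4 * q * (n : ℤ)) := h1
      _ ≤ 2 * C ^ 2 * (1 + ((R0 + 4 * q * (n : ℤ) : ℤ) : ℝ)) ^ (2 * m + 1) := h2
      _ ≤ 2 * C ^ 2 * ((1 + (R0:ℝ) + 4 * (q:ℝ)) * (n:ℝ)) ^ (2 * m + 1) := by
          apply mul_le_mul_of_nonneg_left _ (by positivity)
          exact pow_le_pow_left₀ hbase h3 _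
      _ = K' * (n:ℝ) ^ (2 * m + 1) := by rw [hKdef, mul_pow]; ring
  have hlo := isLittleO_pow_const_const_pow_of_one_lt (R := ℝ) (2 * m + 1) hθ1
  have hev := (hlo.def (show (0:ℝ) < ε / (2 * K') by positivity)).and (eventually_ge_atTop 1)
  obtain ⟨n, hn2, hn1⟩ := hev.exists
  have hθn : (0:ℝ) < θ ^ n := pow_pos hθ0 n
  rw [Real.norm_eq_abs, Real.norm_eq_abs, abs_of_nonneg (by positivity),
    abs_of_nonneg hθn.le] at hn2
  have hb : K' * (n:ℝ) ^ (2 * m + 1) ≤ ε / 2 * θ ^ n := by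
    have h1 := mul_le_mul_of_nonneg_left hn2 hK0.le
    calc K' * (n:ℝ) ^ (2 * m + 1) ≤ K' * (ε / (2 * K') * θ ^ n) := h1
      _ = ε / 2 * θ ^ n := by field_simp
  have ha := hup n hn1
  nlinarith [mul_pos hθn he]
end
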